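/- Let Θ : ℝ³ → ℝ³ be twice continuously differentiable, and write a_j(ξ) := ∂Θ/∂ξ_j for the j-th column of its Jacobian. Then for every cyclic permutation (i,j,k) of (1,2,3), every cyclic permutation (n,m,l) of (1,2,3), and every ξ ∈ ℝ³: ( a_j(ξ) × a_k(ξ) )_n = −[ curl( Θ_l · ∇Θ_m ) ]_i (ξ) = −(1/2)·[ curl( Θ_l · ∇Θ_m − Θ_m · ∇Θ_l ) ]_i (ξ). That is, the cross product form, the conservative curl form, and the invariant curl form of the metric terms J^Ω (a^i)_n all coincide for the exact mapping. -/

import Mathlib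

/-- Partial derivative in the `i`-th coordinate direction. -/
noncomputable def pderiv3 (i : Fin 3) (f : (Fin 3 → ℝ) → ℝ) (x : Fin 3 → ℝ) : ℝ :=
  fderiv ℝ f x (Pi.single i 1)

/-- Gradient of a scalar field on `ℝ³` (with respect to the reference coordinates). -/
noncomputable def grad3 (f : (Fin 3 → ℝ) → ℝ) (x : Fin 3 → ℝ) : Fin 3 → ℝ :=
  fun i => pderiv3 i f x

/-- Curl of a vector field on `ℝ³`:
`curl F = (∂₂F₃ − ∂₃F₂, ∂₃F₁ − ∂₁F₃, ∂₁F₂ − ∂₂F₁)`. -/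
noncomputable def curl3 (F : (Fin 3 → ℝ) → (Fin 3 → ℝ)) (x : Fin 3 → ℝ) : Fin 3 → ℝ :=
  ![pderiv3 1 (fun y => F y 2) x - pderiv3 2 (fun y => F y 1) x,
    pderiv3 2 (fun y => F y 0) x - pderiv3 0 (fun y => F y 2) x,
    pderiv3 0 (fun y => F y 1) x - pderiv3 1 (fun y => F y 0) x]

/-- The covariant basis vector `a_j(ξ) = ∂Θ/∂ξ_j`. -/
noncomputable def covariantBasis (Θ : (Fin 3 → ℝ) → (Fin 3 → ℝ)) (j : Fin 3)
    (ξ : Fin 3 → ℝ) : Fin 3 → ℝ :=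
  fderiv ℝ Θ ξ (Pi.single j 1)

/-- The set of cyclic permutations of `(1,2,3)` (zero-indexed as `(0,1,2)`). -/
def cyclic3 : Set (Fin 3 × Fin 3 × Fin 3) := {(0, 1, 2), (1, 2, 0), (2, 0, 1)}

lemma pderiv3_mul (f g : (Fin 3 → ℝ) → ℝ) (x : Fin 3 → ℝ)
    (hf : DifferentiableAt ℝ f x) (hg : DifferentiableAt ℝ g x) (a : Fin 3) :
    pderiv3 a (fun y => f y * g y) x = pderiv3 a f x * g x + f x * pderiv3 a g x := by
  unfold pderiv3
  rw [fderiv_fun_mul hf hg]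
  simp [mul_comm]
  ring

lemma pderiv3_sub (f g : (Fin 3 → ℝ) → ℝ) (x : Fin 3 → ℝ)
    (hf : DifferentiableAt ℝ f x) (hg : DifferentiableAt ℝ g x) (a : Fin 3) :
    pderiv3 a (fun y => f y - g y) x = pderiv3 a f x - pderiv3 a g x := by
  unfold pderiv3
  rw [fderiv_fun_sub hf hg]
  simp

lemma contDiff_pderiv3 (f : (Fin 3 → ℝ) → ℝ) (hf : ContDiff ℝ 2 f) (b : Fin 3) :
    ContDiff ℝ 1 (fun y => pderiv3 b f y) := by
  unfold pderiv3
  exact (hf.fderiv_right (by norm_num)).clm_apply contDiff_const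

lemma pderiv3_symm (f : (Fin 3 → ℝ) → ℝ) (hf : ContDiff ℝ 2 f) (a b : Fin 3) (x : Fin 3 → ℝ) :
    pderiv3 a (fun y => pderiv3 b f y) x = pderiv3 b (fun y => pderiv3 a f y) x := by
  have hdf : DifferentiableAt ℝ (fderiv ℝ f) x :=
    ((hf.fderiv_right (by norm_num : (1:WithTop ℕ∞) + 1 ≤ 2)).differentiable one_ne_zero) x
  have key : ∀ a b : Fin 3, pderiv3 a (fun y => pderiv3 b f y) x
      = fderiv ℝ (fderiv ℝ f) x (Pi.single a 1) (Pi.single b 1) := by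
    intro a b
    unfold pderiv3
    rw [fderiv_clm_apply hdf (differentiableAt_const _)]
    simp
  rw [key a b, key b a]
  exact hf.contDiffAt.isSymmSndFDerivAt (by simp [minSmoothness_of_isRCLikeNormedField]) _ _

lemma curl3_entry (F : (Fin 3 → ℝ) → (Fin 3 → ℝ)) (x : Fin 3 → ℝ) (i j k : Fin 3)
    (h : (i, j, k) ∈ cyclic3) :
    curl3 F x i = pderiv3 j (fun y => F y k) x - pderiv3 k (fun y => F y j) x := by
  simp only [cyclic3, Set.mem_insert_iff, Set.mem_singleton_iff, Prod.mk.injEq] at h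
  rcases h with ⟨rfl, rfl, rfl⟩ | ⟨rfl, rfl, rfl⟩ | ⟨rfl, rfl, rfl⟩ <;> simp [curl3]

lemma cross_entry (u v : Fin 3 → ℝ) (n m l : Fin 3) (h : (n, m, l) ∈ cyclic3) :
    crossProduct u v n = u m * v l - u l * v m := by
  simp only [cyclic3, Set.mem_insert_iff, Set.mem_singleton_iff, Prod.mk.injEq] at h
  rcases h with ⟨rfl, rfl, rfl⟩ | ⟨rfl, rfl, rfl⟩ | ⟨rfl, rfl, rfl⟩ <;> simp [cross_apply]

lemma covariantBasis_apply (Θ : (Fin 3 → ℝ) → (Fin 3 → ℝ)) (ξ : Fin 3 → ℝ)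
    (hd : DifferentiableAt ℝ Θ ξ) (j p : Fin 3) :
    covariantBasis Θ j ξ p = pderiv3 j (fun x => Θ x p) ξ := by
  unfold covariantBasis pderiv3
  have h : (fun x => Θ x p) = (ContinuousLinearMap.proj p : ((Fin 3 → ℝ)) →L[ℝ] ℝ) ∘ Θ := rfl
  rw [h, fderiv_comp _ (ContinuousLinearMap.differentiableAt _) hd, ContinuousLinearMap.fderiv]
  rfl

lemma curl_term (Θ : (Fin 3 → ℝ) → (Fin 3 → ℝ)) (hΘ : ContDiff ℝ 2 Θ)
    (i j k : Fin 3) (hijk : (i, j, k) ∈ cyclic3) (l m : Fin 3) (ξ : Fin 3 → ℝ) :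
    curl3 (fun η => Θ η l • grad3 (fun ζ => Θ ζ m) η) ξ i =
      pderiv3 j (fun x => Θ x l) ξ * pderiv3 k (fun x => Θ x m) ξ
        - pderiv3 k (fun x => Θ x l) ξ * pderiv3 j (fun x => Θ x m) ξ := by
  have hl : ContDiff ℝ 2 (fun x => Θ x l) :=
    (ContinuousLinearMap.proj l : ((Fin 3 → ℝ)) →L[ℝ] ℝ).contDiff.comp hΘ
  have hm : ContDiff ℝ 2 (fun x => Θ x m) :=
    (ContinuousLinearMap.proj m : ((Fin 3 → ℝ)) →L[ℝ] ℝ).contDiff.comp hΘ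
  rw [curl3_entry _ _ _ _ _ hijk]
  have hF : ∀ c : Fin 3, (fun y => (Θ y l • grad3 (fun ζ => Θ ζ m) y) c)
      = fun y => Θ y l * pderiv3 c (fun ζ => Θ ζ m) y := by
    intro c; funext y; simp [grad3]
  rw [hF, hF]
  rw [pderiv3_mul _ _ _ (hl.differentiable (by norm_num) ξ)
        ((contDiff_pderiv3 _ hm k).differentiable one_ne_zero ξ),
      pderiv3_mul _ _ _ (hl.differentiable (by norm_num) ξ)
        ((contDiff_pderiv3 _ hm j).differentiable one_ne_zero ξ),
      pderiv3_symm _ hm j k]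
  ring

/-- For the exact (C²) mapping `Θ`, the cross product form, the conservative curl form, and
the invariant curl form of the metric terms `J^Ω (a^i)_n` all coincide:
`(a_j × a_k)_n = −[curl(Θ_l ∇Θ_m)]_i = −(1/2)[curl(Θ_l ∇Θ_m − Θ_m ∇Θ_l)]_i`
for all cyclic permutations `(i,j,k)` and `(n,m,l)` of `(1,2,3)`. -/
theorem metric_term_forms_coincide
    (Θ : (Fin 3 → ℝ) → (Fin 3 → ℝ)) (hΘ : ContDiff ℝ 2 Θ)
    (i j k : Fin 3) (hijk : (i, j, k) ∈ cyclic3)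
    (n m l : Fin 3) (hnml : (n, m, l) ∈ cyclic3)
    (ξ : Fin 3 → ℝ) :
    crossProduct (covariantBasis Θ j ξ) (covariantBasis Θ k ξ) n =
        -(curl3 (fun η => Θ η l • grad3 (fun ζ => Θ ζ m) η) ξ i) ∧
    crossProduct (covariantBasis Θ j ξ) (covariantBasis Θ k ξ) n =
        -(1 / 2 : ℝ) *
          (curl3 (fun η => Θ η l • grad3 (fun ζ => Θ ζ m) η
              - Θ η m • grad3 (fun ζ => Θ ζ l) η) ξ i) := by
  have hd : DifferentiableAt ℝ Θ ξ := (hΘ.differentiable (by norm_num)) ξ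
  have hcross : crossProduct (covariantBasis Θ j ξ) (covariantBasis Θ k ξ) n =
      pderiv3 j (fun x => Θ x m) ξ * pderiv3 k (fun x => Θ x l) ξ
        - pderiv3 j (fun x => Θ x l) ξ * pderiv3 k (fun x => Θ x m) ξ := by
    rw [cross_entry _ _ _ _ _ hnml, covariantBasis_apply _ _ hd, covariantBasis_apply _ _ hd,
      covariantBasis_apply _ _ hd, covariantBasis_apply _ _ hd]
  have hcomp : ∀ q : Fin 3, ContDiff ℝ 2 (fun x => Θ x q) := fun q =>
    (ContinuousLinearMap.proj q : ((Fin 3 → ℝ)) →L[ℝ] ℝ).contDiff.comp hΘ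
  constructor
  · rw [hcross, curl_term Θ hΘ i j k hijk l m ξ]; ring
  · rw [hcross]
    rw [curl3_entry _ _ _ _ _ hijk]
    have hF : ∀ c : Fin 3, (fun y => (Θ y l • grad3 (fun ζ => Θ ζ m) y
        - Θ y m • grad3 (fun ζ => Θ ζ l) y) c)
        = fun y => Θ y l * pderiv3 c (fun ζ => Θ ζ m) y
            - Θ y m * pderiv3 c (fun ζ => Θ ζ l) y := by
      intro c; funext y; simp [grad3]
    have hprod : ∀ p q c : Fin 3, DifferentiableAt ℝ
        (fun η => Θ η p * pderiv3 c (fun ζ => Θ ζ q) η) ξ := fun p q c =>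
      (((hcomp p).differentiable (by norm_num) ξ).mul
        (((contDiff_pderiv3 _ (hcomp q) c).differentiable one_ne_zero) ξ))
    rw [hF, hF,
      pderiv3_sub _ _ _ (hprod l m k) (hprod m l k),
      pderiv3_sub _ _ _ (hprod l m j) (hprod m l j),
      pderiv3_mul _ _ _ (((hcomp l).differentiable (by norm_num)) ξ)
        (((contDiff_pderiv3 _ (hcomp m) k).differentiable one_ne_zero) ξ),
      pderiv3_mul _ _ _ (((hcomp m).differentiable (by norm_num)) ξ)
        (((contDiff_pderiv3 _ (hcomp l) k).differentiable one_ne_zero) ξ),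
      pderiv3_mul _ _ _ (((hcomp l).differentiable (by norm_num)) ξ)
        (((contDiff_pderiv3 _ (hcomp m) j).differentiable one_ne_zero) ξ),
      pderiv3_mul _ _ _ (((hcomp m).differentiable (by norm_num)) ξ)
        (((contDiff_pderiv3 _ (hcomp l) j).differentiable one_ne_zero) ξ),
      pderiv3_symm _ (hcomp m) j k, pderiv3_symm _ (hcomp l) j k]
    ring
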